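/- For 0 < q < p ≤ 1, n ≥ 1, and x ∈ [0,1], the deviation of the second moment satisfies |B_{n,p,q}(t²; x) − x²| ≤ 2p^{n−1}/[n]_{p,q}; hence the sup-norm over [0,1] of B_{n,p,q}(t²;·) − (·)² is at most 2p^{n−1}/[n]_{p,q}. -/

import Mathlib

open Finset

noncomputable def pqInt (p q : ℝ) (m : ℕ) : ℝ := (p ^ m - q ^ m) / (p - q)

noncomputable def pqFact (p q : ℝ) (m : ℕ) : ℝ := ∏ j ∈ Finset.Icc 1 m, pqInt p q j

noncomputable def pqChoose (p q : ℝ) (n k : ℕ) : ℝ :=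
  pqFact p q n / (pqFact p q k * pqFact p q (n - k))

/-- The sample node `[k]_{p,q}/(p^{k-n}[n]_{p,q}) = p^{n-k}[k]_{p,q}/[n]_{p,q}`. -/
noncomputable def pqNode (p q : ℝ) (n k : ℕ) : ℝ :=
  p ^ (n - k) * pqInt p q k / pqInt p q n

/-- Basis function `b_{n,k}(x)` of the revised (p,q)-Bernstein operator. -/
noncomputable def pqBasis (p q : ℝ) (n k : ℕ) (x : ℝ) : ℝ :=
  (p ^ (n * (n - 1) / 2))⁻¹ * pqChoose p q n k * p ^ (k * (k - 1) / 2) * x ^ k *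
    ∏ s ∈ Finset.range (n - k), (p ^ s - q ^ s * x)

/-- The revised (p,q)-Bernstein operator. -/
noncomputable def pqBern (p q : ℝ) (n : ℕ) (f : ℝ → ℝ) (x : ℝ) : ℝ :=
  ∑ k ∈ Finset.range (n + 1), pqBasis p q n k x * f (pqNode p q n k)

section aux
variable {p q : ℝ}

lemma pqInt_zero : pqInt p q 0 = 0 := by simp [pqInt]

lemma pqInt_pos (hq : 0 < q) (hqp : q < p) {m : ℕ} (hm : 1 ≤ m) : 0 < pqInt p q m := by
  have h : q ^ m < p ^ m := pow_lt_pow_left₀ hqp hq.le (by omega)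
  exact div_pos (sub_pos.mpr h) (sub_pos.mpr hqp)

lemma pqInt_succ (hqp : q < p) (m : ℕ) : pqInt p q (m + 1) = p ^ m + q * pqInt p q m := by
  have h : p - q ≠ 0 := sub_ne_zero.mpr hqp.ne'
  unfold pqInt
  field_simp
  ring

lemma pqFact_zero : pqFact p q 0 = 1 := by simp [pqFact]

lemma pqFact_succ (m : ℕ) : pqFact p q (m + 1) = pqFact p q m * pqInt p q (m + 1) := by
  rw [pqFact, Finset.prod_Icc_succ_top (by omega)]
  rfl

lemma pqFact_pos (hq : 0 < q) (hqp : q < p) (m : ℕ) : 0 < pqFact p q m := by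
  refine Finset.prod_pos fun j hj => pqInt_pos hq hqp ?_
  exact (Finset.mem_Icc.mp hj).1

lemma pqChoose_zero (hq : 0 < q) (hqp : q < p) (n : ℕ) : pqChoose p q n 0 = 1 := by
  simp [pqChoose, pqFact_zero, div_self (pqFact_pos hq hqp n).ne']

lemma pqChoose_self (hq : 0 < q) (hqp : q < p) (n : ℕ) : pqChoose p q n n = 1 := by
  simp [pqChoose, pqFact_zero, div_self (pqFact_pos hq hqp n).ne']

lemma pqChoose_succ_succ (hq : 0 < q) (hqp : q < p) {m j : ℕ} (hjm : j ≤ m) :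
    pqChoose p q (m + 1) (j + 1) =
      pqInt p q (m + 1) / pqInt p q (j + 1) * pqChoose p q m j := by
  have h1 : m + 1 - (j + 1) = m - j := by omega
  rw [pqChoose, pqChoose, pqFact_succ, pqFact_succ, h1]
  have n1 := (pqFact_pos hq hqp j).ne'
  have n2 := (pqFact_pos hq hqp (m - j)).ne'
  have n3 := (pqInt_pos (p := p) (q := q) hq hqp (m := j + 1) (by omega)).ne'
  field_simp

lemma pqInt_add_split (hqp : q < p) (j d : ℕ) :
    pqInt p q (j + 1 + (d + 1)) =
      p ^ (j + 1) * pqInt p q (d + 1) + q ^ (d + 1) * pqInt p q (j + 1) := by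
  have h : p - q ≠ 0 := sub_ne_zero.mpr hqp.ne'
  unfold pqInt
  field_simp
  ring

lemma pqPascal (hq : 0 < q) (hqp : q < p) {m j : ℕ} (hjm : j + 1 ≤ m) :
    pqChoose p q (m + 1) (j + 1) =
      p ^ (j + 1) * pqChoose p q m (j + 1) + q ^ (m - j) * pqChoose p q m j := by
  obtain ⟨d, rfl⟩ : ∃ d, m = j + 1 + d := ⟨m - (j + 1), by omega⟩
  have h1 : j + 1 + d + 1 - (j + 1) = d + 1 := by omega
  have h2 : j + 1 + d - (j + 1) = d := by omega
  have h3 : j + 1 + d - j = d + 1 := by omega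
  have key := pqInt_add_split (p := p) (q := q) hqp j d
  have e : j + 1 + (d + 1) = j + 1 + d + 1 := by omega
  rw [e] at key
  rw [pqChoose, pqChoose, pqChoose, h1, h2, h3, pqFact_succ (j + 1 + d),
    pqFact_succ j, pqFact_succ d, key]
  have n1 := (pqFact_pos hq hqp j).ne'
  have n2 := (pqFact_pos hq hqp d).ne'
  have n3 := (pqInt_pos (p := p) (q := q) hq hqp (m := j + 1) (by omega)).ne'
  have n4 := (pqInt_pos (p := p) (q := q) hq hqp (m := d + 1) (by omega)).ne'
  have n5 := (pqFact_pos hq hqp (j + 1 + d)).ne'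
  field_simp

lemma choose2_succ (k : ℕ) : (k + 1).choose 2 = k.choose 2 + k := by
  simp [Nat.choose_succ_succ, Nat.choose_one_right, Nat.add_comm]

lemma keyG (hq : 0 < q) (hqp : q < p) (x : ℝ) : ∀ n : ℕ,
    ∑ k ∈ range (n + 1), pqChoose p q n k * p ^ (k.choose 2) * x ^ k *
      ∏ s ∈ range (n - k), (p ^ s - q ^ s * x) = p ^ (n.choose 2) := by
  intro n
  induction n with
  | zero => simp [pqChoose_zero hq hqp]
  | succ m ih =>
    rw [Finset.sum_range_succ']
    set A : ℕ → ℝ := fun k => p ^ k * pqChoose p q m k * p ^ (k.choose 2) * x ^ k *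
      ∏ s ∈ range (m + 1 - k), (p ^ s - q ^ s * x) with hA
    set B : ℕ → ℝ := fun i => q ^ (m - i) * pqChoose p q m i * p ^ ((i + 1).choose 2) *
      x ^ (i + 1) * ∏ s ∈ range (m - i), (p ^ s - q ^ s * x) with hB
    have splitf : ∑ i ∈ range (m + 1), (pqChoose p q (m + 1) (i + 1) *
        p ^ ((i + 1).choose 2) * x ^ (i + 1) *
        ∏ s ∈ range (m + 1 - (i + 1)), (p ^ s - q ^ s * x))
        = ∑ i ∈ range m, A (i + 1) + ∑ i ∈ range (m + 1), B i := by
      rw [Finset.sum_range_succ]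
      have last : pqChoose p q (m + 1) (m + 1) * p ^ ((m + 1).choose 2) * x ^ (m + 1) *
          ∏ s ∈ range (m + 1 - (m + 1)), (p ^ s - q ^ s * x) = B m := by
        simp only [hB, Nat.sub_self, pqChoose_self hq hqp, range_zero, prod_empty]
        ring
      have mid : ∀ i ∈ range m, pqChoose p q (m + 1) (i + 1) *
          p ^ ((i + 1).choose 2) * x ^ (i + 1) *
          ∏ s ∈ range (m + 1 - (i + 1)), (p ^ s - q ^ s * x) = A (i + 1) + B i := by
        intro i hi
        have him : i + 1 ≤ m := mem_range.mp hi
        have e1 : m + 1 - (i + 1) = m - i := by omega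
        rw [pqPascal hq hqp him]
        simp only [hA, hB]
        rw [e1]
        ring
      rw [Finset.sum_congr rfl mid, Finset.sum_add_distrib, Finset.sum_range_succ (f := B),
        last]
      ring
    rw [splitf]
    have t0' : pqChoose p q (m + 1) 0 * p ^ (Nat.choose 0 2) * x ^ 0 *
        ∏ s ∈ range (m + 1 - 0), (p ^ s - q ^ s * x) = A 0 := by
      simp only [hA, pqChoose_zero hq hqp]
      norm_num
    rw [t0']
    have reassoc : ∑ i ∈ range m, A (i + 1) + ∑ i ∈ range (m + 1), B i + A 0
        = (∑ k ∈ range (m + 1), A k) + ∑ i ∈ range (m + 1), B i := by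
      rw [Finset.sum_range_succ' A m]; ring
    rw [reassoc]
    have hAk : ∀ k ∈ range (m + 1), A k = p ^ m * (pqChoose p q m k * p ^ (k.choose 2) *
        x ^ k * ∏ s ∈ range (m - k), (p ^ s - q ^ s * x)) - B k := by
      intro k hk
      have hkm : k ≤ m := by have := mem_range.mp hk; omega
      have e1 : m + 1 - k = (m - k) + 1 := by omega
      have hpk : p ^ k * p ^ (m - k) = p ^ m := by rw [← pow_add]; congr 1; omega
      have hch : p ^ ((k + 1).choose 2) = p ^ k * p ^ (k.choose 2) := by
        rw [← pow_add]; congr 1; rw [choose2_succ]; omega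
      simp only [hA, hB]
      rw [e1, Finset.prod_range_succ, hch]
      linear_combination (pqChoose p q m k * p ^ (k.choose 2) * x ^ k *
        ∏ s ∈ range (m - k), (p ^ s - q ^ s * x)) * hpk
    rw [Finset.sum_congr rfl hAk, Finset.sum_sub_distrib]
    have : (m + 1).choose 2 = m + m.choose 2 := by
      rw [Nat.choose_succ_succ, Nat.choose_one_right]
    rw [this, ← Finset.mul_sum, ih, pow_add]
    ring

lemma part1 (hq : 0 < q) (hqp : q < p) (x : ℝ) (m : ℕ) :
    ∑ i ∈ range (m + 1), (p ^ i * p ^ (2 * (m - i)) * pqChoose p q m i *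
      p ^ ((i + 1).choose 2) * x ^ (i + 1) * ∏ s ∈ range (m - i), (p ^ s - q ^ s * x))
    = p ^ (2 * m) * x * p ^ (m.choose 2) := by
  have congr1 : ∀ i ∈ range (m + 1), (p ^ i * p ^ (2 * (m - i)) * pqChoose p q m i *
      p ^ ((i + 1).choose 2) * x ^ (i + 1) * ∏ s ∈ range (m - i), (p ^ s - q ^ s * x))
      = p ^ (2 * m) * x * (pqChoose p q m i * p ^ (i.choose 2) * x ^ i *
        ∏ s ∈ range (m - i), (p ^ s - q ^ s * x)) := by
    intro i hi
    have him : i ≤ m := by have := mem_range.mp hi; omega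
    have hpow : p ^ i * p ^ (2 * (m - i)) * p ^ ((i + 1).choose 2)
        = p ^ (2 * m) * p ^ (i.choose 2) := by
      rw [← pow_add, ← pow_add, ← pow_add]
      congr 1
      rw [choose2_succ]
      omega
    calc p ^ i * p ^ (2 * (m - i)) * pqChoose p q m i *
        p ^ ((i + 1).choose 2) * x ^ (i + 1) * ∏ s ∈ range (m - i), (p ^ s - q ^ s * x)
        = (p ^ i * p ^ (2 * (m - i)) * p ^ ((i + 1).choose 2)) * (pqChoose p q m i *
          x ^ (i + 1) * ∏ s ∈ range (m - i), (p ^ s - q ^ s * x)) := by ring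
      _ = _ := by rw [hpow]; ring
  rw [Finset.sum_congr rfl congr1, ← Finset.mul_sum, keyG hq hqp x m]

lemma part2 (hq : 0 < q) (hqp : q < p) (x : ℝ) (m : ℕ) :
    ∑ i ∈ range (m + 1), (pqInt p q i * p ^ (2 * (m - i)) * pqChoose p q m i *
      p ^ ((i + 1).choose 2) * x ^ (i + 1) * ∏ s ∈ range (m - i), (p ^ s - q ^ s * x))
    = pqInt p q m * p ^ (2 * m - 1) * x ^ 2 * p ^ ((m - 1).choose 2) := by
  cases m with
  | zero => simp [pqInt_zero]
  | succ l =>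
    rw [Finset.sum_range_succ']
    have h0 : pqInt p q 0 * p ^ (2 * (l + 1 - 0)) * pqChoose p q (l + 1) 0 *
        p ^ ((0 + 1).choose 2) * x ^ (0 + 1) *
        ∏ s ∈ range (l + 1 - 0), (p ^ s - q ^ s * x) = 0 := by
      simp [pqInt_zero]
    rw [h0, add_zero]
    have congr2 : ∀ j ∈ range (l + 1), (pqInt p q (j + 1) * p ^ (2 * (l + 1 - (j + 1))) *
        pqChoose p q (l + 1) (j + 1) * p ^ ((j + 1 + 1).choose 2) * x ^ (j + 1 + 1) *
        ∏ s ∈ range (l + 1 - (j + 1)), (p ^ s - q ^ s * x))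
        = pqInt p q (l + 1) * p ^ (2 * (l + 1) - 1) * x ^ 2 *
          (pqChoose p q l j * p ^ (j.choose 2) * x ^ j *
            ∏ s ∈ range (l - j), (p ^ s - q ^ s * x)) := by
      intro j hj
      have hjl : j ≤ l := by have := mem_range.mp hj; omega
      have e1 : l + 1 - (j + 1) = l - j := by omega
      have hmul : pqInt p q (j + 1) * pqChoose p q (l + 1) (j + 1)
          = pqInt p q (l + 1) * pqChoose p q l j := by
        rw [pqChoose_succ_succ hq hqp hjl]
        have n1 := (pqInt_pos (p := p) (q := q) hq hqp (m := j + 1) (by omega)).ne'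
        field_simp
      have hpow : p ^ (2 * (l - j)) * p ^ ((j + 2).choose 2)
          = p ^ (2 * (l + 1) - 1) * p ^ (j.choose 2) := by
        rw [← pow_add, ← pow_add]
        congr 1
        rw [choose2_succ, choose2_succ]
        omega
      rw [e1]
      calc pqInt p q (j + 1) * p ^ (2 * (l - j)) * pqChoose p q (l + 1) (j + 1) *
          p ^ ((j + 1 + 1).choose 2) * x ^ (j + 1 + 1) *
          ∏ s ∈ range (l - j), (p ^ s - q ^ s * x)
          = (pqInt p q (j + 1) * pqChoose p q (l + 1) (j + 1)) *
            (p ^ (2 * (l - j)) * p ^ ((j + 2).choose 2)) *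
            (x ^ (j + 1 + 1) * ∏ s ∈ range (l - j), (p ^ s - q ^ s * x)) := by ring
        _ = _ := by rw [hmul, hpow]; ring
    rw [Finset.sum_congr rfl congr2, ← Finset.mul_sum, keyG hq hqp x l]
    norm_num

lemma basis_choose (n k : ℕ) (x : ℝ) : pqBasis p q n k x =
    (p ^ (n.choose 2))⁻¹ * pqChoose p q n k * p ^ (k.choose 2) * x ^ k *
      ∏ s ∈ Finset.range (n - k), (p ^ s - q ^ s * x) := by
  rw [pqBasis, Nat.choose_two_right, Nat.choose_two_right]

lemma pqBern_sq (hq : 0 < q) (hqp : q < p) (x : ℝ) (m : ℕ) :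
    pqBern p q (m + 1) (fun t => t ^ 2) x =
      p ^ m / pqInt p q (m + 1) * x + q * pqInt p q m / pqInt p q (m + 1) * x ^ 2 := by
  have hp0 : (0:ℝ) < p := hq.trans hqp
  have hm1 : (0:ℝ) < pqInt p q (m + 1) := pqInt_pos hq hqp (by omega)
  rw [pqBern, Finset.sum_range_succ']
  have h0 : pqBasis p q (m + 1) 0 x * (fun t => t ^ 2) (pqNode p q (m + 1) 0) = 0 := by
    simp [pqNode, pqInt_zero]
  rw [h0, add_zero]
  have term_eq : ∀ i ∈ range (m + 1),
      pqBasis p q (m + 1) (i + 1) x * (fun t => t ^ 2) (pqNode p q (m + 1) (i + 1))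
      = (p ^ ((m + 1).choose 2))⁻¹ * (pqInt p q (m + 1))⁻¹ *
        ((p ^ i * p ^ (2 * (m - i)) * pqChoose p q m i *
            p ^ ((i + 1).choose 2) * x ^ (i + 1) * ∏ s ∈ range (m - i), (p ^ s - q ^ s * x))
         + q * (pqInt p q i * p ^ (2 * (m - i)) * pqChoose p q m i *
            p ^ ((i + 1).choose 2) * x ^ (i + 1) *
              ∏ s ∈ range (m - i), (p ^ s - q ^ s * x))) := by
    intro i hi
    have him : i ≤ m := by have := mem_range.mp hi; omega
    have e1 : m + 1 - (i + 1) = m - i := by omega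
    have hi1 : (0:ℝ) < pqInt p q (i + 1) := pqInt_pos hq hqp (by omega)
    rw [basis_choose, pqNode, e1, pqChoose_succ_succ hq hqp him]
    simp only
    rw [pqInt_succ hqp i] at hi1 ⊢
    have hpN : (0:ℝ) < p ^ ((m + 1).choose 2) := pow_pos hp0 _
    field_simp
    ring
  rw [Finset.sum_congr rfl term_eq, ← Finset.mul_sum, Finset.sum_add_distrib,
    ← Finset.mul_sum _ _ q, part1 hq hqp x m, part2 hq hqp x m]
  have e2 : p ^ (2 * m) * p ^ (m.choose 2) = p ^ ((m + 1).choose 2) * p ^ m := by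
    rw [← pow_add, ← pow_add, choose2_succ]
    congr 1
    omega
  have e3 : p ^ (2 * m - 1) * p ^ ((m - 1).choose 2) = p ^ ((m + 1).choose 2) ∨
      pqInt p q m = 0 := by
    cases m with
    | zero => right; exact pqInt_zero
    | succ l =>
      left
      rw [← pow_add]
      congr 1
      rw [choose2_succ, choose2_succ, show l + 1 - 1 = l from rfl]
      omega
  have hpN : (p:ℝ) ^ ((m + 1).choose 2) ≠ 0 := (pow_pos hp0 _).ne'
  rcases e3 with h | h
  · linear_combination (p ^ ((m + 1).choose 2))⁻¹ * (pqInt p q (m + 1))⁻¹ * x * e2 +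
      (p ^ ((m + 1).choose 2))⁻¹ * (pqInt p q (m + 1))⁻¹ * q * pqInt p q m * x ^ 2 * h +
      (pqInt p q (m + 1))⁻¹ * (x * p ^ m + q * pqInt p q m * x ^ 2) * mul_inv_cancel₀ hpN
  · rw [h]
    linear_combination (p ^ ((m + 1).choose 2))⁻¹ * (pqInt p q (m + 1))⁻¹ * x * e2 +
      (pqInt p q (m + 1))⁻¹ * (x * p ^ m) * mul_inv_cancel₀ hpN

end aux

theorem pqBern_sq_deviation (p q : ℝ) (n : ℕ) (hn : 1 ≤ n)
    (hq : 0 < q) (hqp : q < p) (hp : p ≤ 1) :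
    (∀ x ∈ Set.Icc (0:ℝ) 1,
        |pqBern p q n (fun t => t ^ 2) x - x ^ 2| ≤ 2 * p ^ (n - 1) / pqInt p q n) ∧
      (⨆ x ∈ Set.Icc (0:ℝ) 1, |pqBern p q n (fun t => t ^ 2) x - x ^ 2|) ≤
        2 * p ^ (n - 1) / pqInt p q n := by
  obtain ⟨m, rfl⟩ : ∃ m, n = m + 1 := ⟨n - 1, by omega⟩
  have hp0 : (0:ℝ) < p := hq.trans hqp
  have hm1 : (0:ℝ) < pqInt p q (m + 1) := pqInt_pos hq hqp (by omega)
  have hmm : m + 1 - 1 = m := rfl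
  have hbound : ∀ x ∈ Set.Icc (0:ℝ) 1,
      |pqBern p q (m + 1) (fun t => t ^ 2) x - x ^ 2| ≤
        2 * p ^ (m + 1 - 1) / pqInt p q (m + 1) := by
    intro x hx
    obtain ⟨hx0, hx1⟩ := hx
    have hD : pqBern p q (m + 1) (fun t => t ^ 2) x - x ^ 2
        = p ^ m / pqInt p q (m + 1) * (x - x ^ 2) := by
      rw [pqBern_sq hq hqp x m, pqInt_succ hqp m]
      have hne : (0:ℝ) < p ^ m + q * pqInt p q m := by rw [← pqInt_succ hqp m]; exact hm1
      field_simp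
      ring
    rw [hmm, hD]
    have hxx : 0 ≤ x - x ^ 2 := by nlinarith
    have hxx1 : x - x ^ 2 ≤ 1 := by nlinarith
    have hc : 0 ≤ p ^ m / pqInt p q (m + 1) := by positivity
    rw [abs_of_nonneg (by positivity)]
    calc p ^ m / pqInt p q (m + 1) * (x - x ^ 2) ≤ p ^ m / pqInt p q (m + 1) * 1 := by
          exact mul_le_mul_of_nonneg_left hxx1 hc
      _ = p ^ m / pqInt p q (m + 1) := by ring
      _ ≤ 2 * p ^ m / pqInt p q (m + 1) := by
          gcongr
          nlinarith [pow_pos hp0 m]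
  refine ⟨hbound, ?_⟩
  have hc0 : 0 ≤ 2 * p ^ (m + 1 - 1) / pqInt p q (m + 1) := by positivity
  refine Real.iSup_le (fun x => Real.iSup_le (fun hx => hbound x hx) hc0) hc0
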